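/- Let a, b, c, ℋ₀ be real constants with b ≥ 2c, c > 0, ℋ₀ ≥ c and a > b + c, and define erf(r) := (2/√π)∫₀^r e^{−t²} dt. Fix v ∈ ℝ and define for r > 0: ρ(v,r) := ( c·e^{−v²}·cosh⁻²(r)·(1/r − 2·tanh(r)) + ℋ₀·( erf(r) + (r·e^{−r²}/√π)·(5/2 − r²) ) ) / D(v,r), where D(v,r) := a − b tanh(v) + 2 c v tanh(r) e^{−v²}. Then ρ(v,r) tends to +∞ as r → 0⁺. -/

import Mathlib

open Topology Filter

/-- divergence of the energy density of the example shell at the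
axis: with `b ≥ 2c`, `c > 0`, `ℋ₀ ≥ c`, `a > b + c` and `v ∈ ℝ` fixed,
`ρ(v,r) → +∞` as `r → 0⁺`. -/
theorem stmt_15 (a b c H0 : ℝ) (h1 : 2 * c ≤ b) (h2 : 0 < c) (h4 : c ≤ H0)
    (h3 : b + c < a) (v : ℝ) :
    Tendsto (fun r : ℝ =>
        (c * Real.exp (-v^2) * ((Real.cosh r)^2)⁻¹ * (1 / r - 2 * Real.tanh r)
          + H0 * ((2 / Real.sqrt Real.pi) * (∫ t in (0:ℝ)..r, Real.exp (-t^2))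
            + (r * Real.exp (-r^2) / Real.sqrt Real.pi) * (5 / 2 - r^2))) /
        (a - b * Real.tanh v + 2 * c * v * Real.tanh r * Real.exp (-v^2)))
      (𝓝[>] (0 : ℝ)) atTop := by
  have continuous_tanh : Continuous Real.tanh := by
    have h : Real.tanh = fun x => Real.sinh x / Real.cosh x :=
      funext fun x => Real.tanh_eq_sinh_div_cosh x
    rw [h]
    exact Real.continuous_sinh.div Real.continuous_cosh fun x => (Real.cosh_pos x).ne'
  have hle : (𝓝[>] (0:ℝ)) ≤ 𝓝 0 := nhdsWithin_le_nhds
  -- continuity of the error-function primitive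
  have hint : Continuous fun r : ℝ => ∫ t in (0:ℝ)..r, Real.exp (-t^2) :=
    intervalIntegral.continuous_primitive
      (fun u w => ((Real.continuous_exp.comp (by continuity)).intervalIntegrable u w)) 0
  have hcosh : Continuous fun r : ℝ => ((Real.cosh r)^2)⁻¹ :=
    (Real.continuous_cosh.pow 2).inv₀ fun x => pow_ne_zero _ (ne_of_gt (Real.cosh_pos x))
  -- main divergent part of the numerator
  have hf1 : Tendsto (fun r : ℝ =>
      (c * Real.exp (-v^2) * ((Real.cosh r)^2)⁻¹) * (1/r)) (𝓝[>] (0:ℝ)) atTop := by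
    apply Tendsto.pos_mul_atTop
      (show (0:ℝ) < c * Real.exp (-v^2) * ((Real.cosh (0:ℝ))^2)⁻¹ by
        have := Real.cosh_pos (0:ℝ); positivity)
    · exact ((continuous_const.mul hcosh).tendsto 0).mono_left hle
    · exact (tendsto_inv_nhdsGT_zero (𝕜 := ℝ)).congr fun r => (one_div r).symm
  -- bounded remainder of the numerator
  have hg : Continuous fun r : ℝ =>
      c * Real.exp (-v^2) * ((Real.cosh r)^2)⁻¹ * (-(2 * Real.tanh r))
        + H0 * ((2 / Real.sqrt Real.pi) * (∫ t in (0:ℝ)..r, Real.exp (-t^2))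
          + (r * Real.exp (-r^2) / Real.sqrt Real.pi) * (5 / 2 - r^2)) := by
    apply Continuous.add
    · exact (continuous_const.mul hcosh).mul
        ((continuous_const.mul continuous_tanh).neg)
    · apply continuous_const.mul
      apply Continuous.add
      · exact continuous_const.mul hint
      · exact ((continuous_id.mul (Real.continuous_exp.comp (by continuity))).div_const _).mul
          (by continuity)
  have hN : Tendsto (fun r : ℝ =>
      c * Real.exp (-v^2) * ((Real.cosh r)^2)⁻¹ * (1 / r - 2 * Real.tanh r)
        + H0 * ((2 / Real.sqrt Real.pi) * (∫ t in (0:ℝ)..r, Real.exp (-t^2))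
          + (r * Real.exp (-r^2) / Real.sqrt Real.pi) * (5 / 2 - r^2)))
      (𝓝[>] (0:ℝ)) atTop := by
    have := hf1.atTop_add ((hg.tendsto 0).mono_left hle)
    refine this.congr fun r => ?_
    ring
  -- denominator tends to a positive constant
  have htanh : Real.tanh v < 1 := by
    rw [Real.tanh_eq_sinh_div_cosh, div_lt_one (Real.cosh_pos v)]
    exact Real.sinh_lt_cosh v
  have hD0 : 0 < a - b * Real.tanh v := by nlinarith
  have hD : Tendsto (fun r : ℝ =>
      (a - b * Real.tanh v + 2 * c * v * Real.tanh r * Real.exp (-v^2))⁻¹)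
      (𝓝[>] (0:ℝ)) (𝓝 (a - b * Real.tanh v)⁻¹) := by
    have hc : Continuous fun r : ℝ =>
        a - b * Real.tanh v + 2 * c * v * Real.tanh r * Real.exp (-v^2) := by fun_prop
    have := (hc.tendsto 0).mono_left hle
    simp only [Real.tanh_zero, mul_zero, zero_mul, add_zero] at this
    exact this.inv₀ (ne_of_gt hD0)
  simp only [div_eq_mul_inv]
  exact hN.atTop_mul_pos (by positivity) hD
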